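/- Let K be a field, A a commutative K-algebra, R an associative A-algebra, M an R-R-bimodule. Two abelian extensions of R by M (A-algebra extensions 0 → M → S → R → 0 with M² = 0 inducing the given bimodule structure) are equivalent if and only if any two pairs of K-linear sections produce cohomologous 2-cocycles: if h, h' : R → S are K-linear sections of p and (f,g), (f',g') are the associated cocycles f(r,s) = h(r)h(s) − h(rs), g(a,r) = a·h(r) − h(ar), then (f − f', g − g') ∈ B²(A,R,M). -/
import Mathlib


/-!
STATEMENT 13: Two abelian extensions `0 → M → S →p R → 0`, `0 → M → S' →p' R → 0`
of `A`-algebras (kernels squaring to zero, inducing the given `R`-`R`-bimodule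
structure on `M`) are equivalent iff any two pairs of `K`-linear sections
produce cohomologous 2-cocycles: for sections `h, h'` of `p, p'` with associated
cocycles `f(r,s) = h(r)h(s) − h(rs)`, `g(a,r) = a·h(r) − h(ar)` (values in `M`,
identified through the inclusions `ι, ι'`), the difference `(f−f', g−g')` lies
in `B²(A,R,M)`.
-/

noncomputable section

variable (K A R M S S' : Type*) [Field K] [CommRing A] [Algebra K A]
  [Ring R] [Algebra K R] [Algebra A R] [IsScalarTower K A R]
  [AddCommGroup M] [Module K M] [Module R M] [Module Rᵐᵒᵖ M]
  [SMulCommClass R Rᵐᵒᵖ M] [IsScalarTower K R M]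
  [Ring S] [Algebra A S] [Algebra K S] [IsScalarTower K A S]
  [Ring S'] [Algebra A S'] [Algebra K S'] [IsScalarTower K A S']

theorem extensions_equivalent_iff_cocycles_cohomologous
    -- the first abelian extension 0 → M → S → R → 0
    (p : S →ₐ[A] R) (ι : M →ₗ[K] S)
    (hp : Function.Surjective p) (hι : Function.Injective ι)
    (hker : ∀ x : S, p x = 0 ↔ x ∈ Set.range ι)
    (hsq : ∀ m m' : M, ι m * ι m' = 0)
    (hbimodL : ∀ (s : S) (m : M), ι (p s • m) = s * ι m)
    (hbimodR : ∀ (s : S) (m : M), ι (MulOpposite.op (p s) • m) = ι m * s)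
    -- the second abelian extension 0 → M → S' → R → 0
    (p' : S' →ₐ[A] R) (ι' : M →ₗ[K] S')
    (hp' : Function.Surjective p') (hι' : Function.Injective ι')
    (hker' : ∀ x : S', p' x = 0 ↔ x ∈ Set.range ι')
    (hsq' : ∀ m m' : M, ι' m * ι' m' = 0)
    (hbimodL' : ∀ (s : S') (m : M), ι' (p' s • m) = s * ι' m)
    (hbimodR' : ∀ (s : S') (m : M), ι' (MulOpposite.op (p' s) • m) = ι' m * s) :
    -- equivalence of the two extensions …
    (∃ φ : S →ₐ[A] S', (∀ m : M, φ (ι m) = ι' m) ∧ ∀ s : S, p' (φ s) = p s) ↔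
    -- … iff any two pairs of K-linear sections give cohomologous cocycles
    (∀ (h : R →ₗ[K] S) (h' : R →ₗ[K] S'),
      (∀ r, p (h r) = r) → (∀ r, p' (h' r) = r) →
      ∀ (f f' : R → R → M) (g g' : A → R → M),
        (∀ r s : R, ι (f r s) = h r * h s - h (r * s)) →
        (∀ (a : A) (r : R), ι (g a r) = a • h r - h (a • r)) →
        (∀ r s : R, ι' (f' r s) = h' r * h' s - h' (r * s)) →
        (∀ (a : A) (r : R), ι' (g' a r) = a • h' r - h' (a • r)) →
        ∃ k : R →ₗ[K] M,
          (∀ r s : R,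
            f r s - f' r s = r • k s - k (r * s) + MulOpposite.op s • k r) ∧
          (∀ (a : A) (r : R),
            g a r - g' a r = algebraMap A R a • k r - k (a • r))) := by
  constructor
  ·
    rintro ⟨φ, hφι, hφp⟩ h h' hh hh' f f' g g' hf hg hf' hg'
    have mem' : ∀ x : S', p' x = 0 → x ∈ LinearMap.range ι' := fun x hx => by
      obtain ⟨m, hm⟩ := (hker' x).mp hx; exact ⟨m, hm⟩
    set φL : S →ₗ[K] S' := (φ.toLinearMap.restrictScalars K) with hφL
    set k : R →ₗ[K] M := LinearMap.codRestrictOfInjective (φL ∘ₗ h - h') ι' hι'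
      (fun r => mem' _ (by simp [φL, hφp, hh, hh'])) with hk
    have hkap : ∀ r : R, ι' (k r) = φ (h r) - h' r := fun r => by
      rw [hk, LinearMap.codRestrictOfInjective_comp_apply]
      simp [φL]
    refine ⟨k, fun r s => hι' ?_, fun a r => hι' ?_⟩
    · have e1 : ι' (f r s) = φ (h r) * φ (h s) - φ (h (r * s)) := by
        rw [← hφι, hf, map_sub, map_mul]
      have e2 : ι' (r • k s) = φ (h r) * (φ (h s) - h' s) := by
        have := hbimodL' (φ (h r)) (k s)
        rw [hφp, hh] at this
        rw [this, hkap]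
      have e3 : ι' (MulOpposite.op s • k r) = (φ (h r) - h' r) * h' s := by
        have := hbimodR' (h' s) (k r)
        rw [hh'] at this
        rw [this, hkap]
      rw [map_sub, map_add, map_sub, e1, e2, e3, hf', hkap]
      noncomm_ring
    · have e1 : ι' (g a r) = a • φ (h r) - φ (h (a • r)) := by
        rw [← hφι, hg, map_sub, map_smul]
      have e2 : ι' (algebraMap A R a • k r) = a • (φ (h r) - h' r) := by
        have := hbimodL' (algebraMap A S' a) (k r)
        rw [AlgHom.commutes] at this
        rw [this, hkap, ← Algebra.smul_def]
      rw [map_sub, map_sub, e1, e2, hg', hkap, smul_sub]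
      abel
  ·
    intro H
    -- sections
    obtain ⟨h, hhL⟩ := (p.toLinearMap.restrictScalars K).exists_rightInverse_of_surjective
      (LinearMap.range_eq_top.2 hp)
    obtain ⟨h', hhL'⟩ := (p'.toLinearMap.restrictScalars K).exists_rightInverse_of_surjective
      (LinearMap.range_eq_top.2 hp')
    have hh : ∀ r, p (h r) = r := fun r => congrArg (fun f => f r) hhL
    have hh' : ∀ r, p' (h' r) = r := fun r => congrArg (fun f => f r) hhL'
    have mem : ∀ x : S, p x = 0 → x ∈ LinearMap.range ι := fun x hx => by
      obtain ⟨m, hm⟩ := (hker x).mp hx; exact ⟨m, hm⟩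
    have mem' : ∀ x : S', p' x = 0 → x ∈ LinearMap.range ι' := fun x hx => by
      obtain ⟨m, hm⟩ := (hker' x).mp hx; exact ⟨m, hm⟩
    -- the "remainder" maps q, q'
    set q : S →ₗ[K] M := LinearMap.codRestrictOfInjective
      (LinearMap.id - h ∘ₗ (p.toLinearMap.restrictScalars K)) ι hι
      (fun x => mem _ (by simp [hh])) with hqdef
    set q' : S' →ₗ[K] M := LinearMap.codRestrictOfInjective
      (LinearMap.id - h' ∘ₗ (p'.toLinearMap.restrictScalars K)) ι' hι'
      (fun x => mem' _ (by simp [hh'])) with hqdef'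
    have hq : ∀ x : S, ι (q x) = x - h (p x) := fun x => by
      rw [hqdef, LinearMap.codRestrictOfInjective_comp_apply]; rfl
    have hq' : ∀ x : S', ι' (q' x) = x - h' (p' x) := fun x => by
      rw [hqdef', LinearMap.codRestrictOfInjective_comp_apply]; rfl
    -- cocycles
    set f : R → R → M := fun r s => q (h r * h s) with hfdef
    set g : A → R → M := fun a r => q (a • h r) with hgdef
    set f' : R → R → M := fun r s => q' (h' r * h' s) with hfdef'
    set g' : A → R → M := fun a r => q' (a • h' r) with hgdef'
    have hf : ∀ r s : R, ι (f r s) = h r * h s - h (r * s) := fun r s => by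
      rw [hfdef, hq, map_mul, hh, hh]
    have hg : ∀ (a : A) (r : R), ι (g a r) = a • h r - h (a • r) := fun a r => by
      rw [hgdef, hq, map_smul, hh]
    have hf' : ∀ r s : R, ι' (f' r s) = h' r * h' s - h' (r * s) := fun r s => by
      rw [hfdef', hq', map_mul, hh', hh']
    have hg' : ∀ (a : A) (r : R), ι' (g' a r) = a • h' r - h' (a • r) := fun a r => by
      rw [hgdef', hq', map_smul, hh']
    obtain ⟨k, hk1, hk2⟩ := H h h' hh hh' f f' g g' hf hg hf' hg'
    -- structure of multiplication in S
    have M1 : ∀ s t : S, q (s * t)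
        = f (p s) (p t) + p s • q t + MulOpposite.op (p t) • q s := by
      intro s t
      apply hι
      have e2 : ι (p s • q t) = h (p s) * (t - h (p t)) := by
        have := hbimodL (h (p s)) (q t); rw [hh] at this; rw [this, hq]
      have e3 : ι (MulOpposite.op (p t) • q s) = (s - h (p s)) * h (p t) := by
        have := hbimodR (h (p t)) (q s); rw [hh] at this; rw [this, hq]
      have z : (s - h (p s)) * (t - h (p t)) = 0 := by
        rw [← hq, ← hq]; exact hsq _ _
      rw [map_add, map_add, hq, hf, e2, e3, map_mul, ← sub_eq_zero, ← z]
      noncomm_ring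
    have M2 : ∀ (a : A) (s : S), q (a • s)
        = g a (p s) + algebraMap A R a • q s := by
      intro a s
      apply hι
      have e2 : ι (algebraMap A R a • q s) = a • s - a • h (p s) := by
        have := hbimodL (algebraMap A S a) (q s)
        rw [AlgHom.commutes] at this
        rw [this, hq, mul_sub, ← Algebra.smul_def, ← Algebra.smul_def]
      rw [map_add, hq, hg, e2, map_smul]
      abel
    -- value at 1
    have N1 : f 1 1 = - q 1 := by
      apply hι
      have z : (1 - h (p 1)) * (1 - h (p 1)) = 0 := by rw [← hq]; exact hsq _ _
      rw [map_one] at z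
      rw [map_neg, hf, one_mul, hq, map_one p, ← sub_eq_zero, ← z]
      noncomm_ring
    have N1' : f' 1 1 = - q' 1 := by
      apply hι'
      have z : (1 - h' (p' 1)) * (1 - h' (p' 1)) = 0 := by rw [← hq']; exact hsq' _ _
      rw [map_one] at z
      rw [map_neg, hf', one_mul, hq', map_one p', ← sub_eq_zero, ← z]
      noncomm_ring
    have key1 : q 1 + k 1 = q' 1 := by
      have h0 := hk1 1 1
      rw [N1, N1', one_mul, MulOpposite.op_one, one_smul, one_smul] at h0
      linear_combination (norm := abel) -h0
    have key2 : ∀ s t : S, q (s * t) + k (p s * p t)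
        = f' (p s) (p t) + p s • (q t + k (p t)) + MulOpposite.op (p t) • (q s + k (p s)) := by
      intro s t
      rw [M1, smul_add, smul_add]
      linear_combination (norm := abel) hk1 (p s) (p t)
    have key3 : ∀ (a : A) (s : S), q (a • s) + k (a • p s)
        = g' a (p s) + algebraMap A R a • (q s + k (p s)) := by
      intro a s
      rw [M2, smul_add]
      linear_combination (norm := abel) hk2 a (p s)
    -- auxiliary S'-level facts
    have smul' : ∀ (a : A) (m : M), a • ι' m = ι' (algebraMap A R a • m) := by
      intro a m
      have := hbimodL' (algebraMap A S' a) m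
      rw [AlgHom.commutes] at this
      rw [this, ← Algebra.smul_def]
    -- the map
    set pK : S →ₗ[K] R := p.toLinearMap.restrictScalars K with hpK
    set φ₀ : S →ₗ[K] S' := h' ∘ₗ pK + ι' ∘ₗ (q + k ∘ₗ pK) with hφ₀def
    have hφ₀ : ∀ s : S, φ₀ s = h' (p s) + ι' (q s + k (p s)) := fun s => by
      simp [hφ₀def, pK]
    have hone : φ₀ 1 = 1 := by
      rw [hφ₀, map_one p, key1, hq', map_one p']
      abel
    have hmul : ∀ s t : S, φ₀ (s * t) = φ₀ s * φ₀ t := by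
      intro s t
      have E2 : h' (p s) * ι' (q t + k (p t)) = ι' (p s • (q t + k (p t))) := by
        have := hbimodL' (h' (p s)) (q t + k (p t)); rw [hh'] at this; rw [this]
      have E3 : ι' (q s + k (p s)) * h' (p t) = ι' (MulOpposite.op (p t) • (q s + k (p s))) := by
        have := hbimodR' (h' (p t)) (q s + k (p s)); rw [hh'] at this; rw [this]
      have E4 : h' (p s) * h' (p t) = h' (p s * p t) + ι' (f' (p s) (p t)) := by
        rw [hf']; abel
      rw [hφ₀, hφ₀, hφ₀, map_mul, add_mul, mul_add, mul_add, hsq', E2, E3, E4,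
        key2, map_add, map_add]
      abel
    have hsmul : ∀ (a : A) (s : S), φ₀ (a • s) = a • φ₀ s := by
      intro a s
      have hpas : p (a • s) = a • p s := map_smul p a s
      have E1 : a • h' (p s) = h' (a • p s) + ι' (g' a (p s)) := by
        rw [hg']; abel
      rw [hφ₀, hφ₀, hpas, smul_add, smul', E1, key3, map_add]
      abel
    set φr : S →+* S' :=
      { toFun := φ₀, map_one' := hone, map_mul' := hmul,
        map_zero' := map_zero φ₀, map_add' := map_add φ₀ } with hφr
    refine ⟨AlgHom.mk' φr hsmul, fun m => ?_, fun s => ?_⟩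
    · have hpι : p (ι m) = 0 := (hker (ι m)).mpr ⟨m, rfl⟩
      have hqι : q (ι m) = m := by
        apply hι; rw [hq, hpι, map_zero, sub_zero]
      show φ₀ (ι m) = ι' m
      rw [hφ₀, hpι, hqι, map_zero, map_zero, add_zero, zero_add]
    · show p' (φ₀ s) = p s
      have hp'ι' : ∀ m : M, p' (ι' m) = 0 := fun m => (hker' (ι' m)).mpr ⟨m, rfl⟩
      rw [hφ₀, map_add, hp'ι', hh', add_zero]


end
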